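/- With the same hypotheses (d₂(f₂^{(k)}) = f₂^{(k)} d₂f₁ for all k ≥ 1), if P and Q are homogeneous polynomials of degrees p and q respectively in s variables, and Q(f₂^{(k₁)},…,f₂^{(k_s)}) is nowhere zero, then d₂(P/Q)(f₂^{(k₁)},…,f₂^{(k_s)}) = (p−q)·(P/Q)(f₂^{(k₁)},…,f₂^{(k_s)})·d₂f₁. -/

import Mathlib

open scoped ContDiff

noncomputable section

variable {E₂ : Type*} [NormedAddCommGroup E₂] [NormedSpace ℝ E₂]

/-- Derivative along the 1-dimensional first factor (with arc length coordinate `t`) of the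
product `M = M₁ × M₂ = ℝ × M₂`. -/
def derT (g : ℝ × E₂ → ℝ) : ℝ × E₂ → ℝ := fun x => fderiv ℝ g x (1, 0)

theorem contDiff_derT_aux {g : ℝ × E₂ → ℝ} (hg : ContDiff ℝ ∞ g) : ContDiff ℝ ∞ (derT g) :=
  (hg.fderiv_right (by simp)).clm_apply contDiff_const

theorem contDiff_derT_iter_aux {g : ℝ × E₂ → ℝ} (hg : ContDiff ℝ ∞ g) (n : ℕ) :
    ContDiff ℝ ∞ (derT^[n] g) := by
  induction n with
  | zero => exact hg
  | succ n ih => rw [Function.iterate_succ_apply']; exact contDiff_derT_aux ih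

theorem hasDerivAt_pow_rel_aux {φ : ℝ → ℝ} {ψ : ℝ} {t : ℝ}
    (h : HasDerivAt φ (φ t * ψ) t) (m : ℕ) :
    HasDerivAt (fun r => φ r ^ m) ((m : ℝ) * φ t ^ m * ψ) t := by
  induction m with
  | zero => simpa using hasDerivAt_const t (1 : ℝ)
  | succ m ih =>
    have := ih.fun_mul h
    simp only [← pow_succ] at this
    refine this.congr_deriv ?_
    push_cast
    ring

theorem hasDerivAt_prod_pow_rel_aux {ι : Type*} {φ : ι → ℝ → ℝ} {ψ : ℝ} {t : ℝ}
    (u : Finset ι) (e : ι → ℕ) (h : ∀ j ∈ u, HasDerivAt (φ j) (φ j t * ψ) t) :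
    HasDerivAt (fun r => ∏ j ∈ u, φ j r ^ e j)
      ((∑ j ∈ u, (e j : ℝ)) * (∏ j ∈ u, φ j t ^ e j) * ψ) t := by
  classical
  induction u using Finset.cons_induction with
  | empty => simpa using hasDerivAt_const t (1 : ℝ)
  | cons a u ha ih =>
    simp only [Finset.prod_cons, Finset.sum_cons]
    have h1 := hasDerivAt_pow_rel_aux (h a (Finset.mem_cons_self a u)) (e a)
    have h2 := ih fun j hj => h j (Finset.mem_cons_of_mem hj)
    have := h1.fun_mul h2
    refine this.congr_deriv ?_
    ring

theorem hasDerivAt_eval_rel_aux {s : ℕ} {φ : Fin s → ℝ → ℝ} {ψ : ℝ} {t : ℝ}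
    (h : ∀ j, HasDerivAt (φ j) (φ j t * ψ) t)
    {P : MvPolynomial (Fin s) ℝ} {p : ℕ} (hP : P.IsHomogeneous p) :
    HasDerivAt (fun r => MvPolynomial.eval (fun j => φ j r) P)
      ((p : ℝ) * MvPolynomial.eval (fun j => φ j t) P * ψ) t := by
  classical
  simp only [MvPolynomial.eval_eq']
  have key : ∀ d ∈ P.support,
      HasDerivAt (fun r => P.coeff d * ∏ j, φ j r ^ d j)
        (P.coeff d * ((p : ℝ) * (∏ j, φ j t ^ d j) * ψ)) t := by
    intro d hd
    have hdeg : (∑ j, (d j : ℝ)) = (p : ℝ) := by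
      have h1 : ∑ j ∈ d.support, d j = p := by
        have := hP (MvPolynomial.mem_support_iff.mp hd)
        rwa [Pi.one_def, ← Finsupp.degree_eq_weight_one, Finsupp.degree_apply] at this
      have h2 : ∑ j ∈ d.support, d j = ∑ j, d j :=
        Finset.sum_subset (Finset.subset_univ _)
          (fun j _ hj => Finsupp.notMem_support_iff.mp hj)
      rw [← Nat.cast_sum, ← h2, h1]
    have := (hasDerivAt_prod_pow_rel_aux Finset.univ (fun j => d j)
      (fun j _ => h j)).const_mul (P.coeff d)
    rwa [hdeg] at this
  have := HasDerivAt.fun_sum key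
  refine this.congr_deriv ?_
  rw [Finset.mul_sum, Finset.sum_mul]
  exact Finset.sum_congr rfl fun d _ => by ring

/-- In the setting of the homogeneity lemma (`d₂(f₂^{(k)}) = f₂^{(k)} d₂f₁` for
all `k ≥ 1`), if `P` and `Q` are homogeneous polynomials of degrees `p`, `q` in `s` variables and
`Q(f₂^{(k₁)}, …, f₂^{(k_s)})` is nowhere zero, then
`d₂ (P/Q)(f₂^{(k₁)}, …, f₂^{(k_s)}) = (p − q) · (P/Q)(f₂^{(k₁)}, …, f₂^{(k_s)}) · d₂f₁`. -/
theorem homogeneous_rational_partial_differential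
    (f₁ f₂ : ℝ × E₂ → ℝ) (hf₁ : ContDiff ℝ ∞ f₁) (hf₂ : ContDiff ℝ ∞ f₂)
    (hrel : ∀ k : ℕ, 1 ≤ k → ∀ (x : ℝ × E₂) (v₂ : E₂),
      fderiv ℝ (derT^[k] f₂) x (0, v₂) = derT^[k] f₂ x * fderiv ℝ f₁ x (0, v₂))
    {s : ℕ} (P Q : MvPolynomial (Fin s) ℝ) {p q : ℕ}
    (hP : P.IsHomogeneous p) (hQ : Q.IsHomogeneous q)
    (k : Fin s → ℕ) (hk : ∀ j, 1 ≤ k j)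
    (hQne : ∀ x : ℝ × E₂, MvPolynomial.eval (fun j => derT^[k j] f₂ x) Q ≠ 0) :
    ∀ (x : ℝ × E₂) (v₂ : E₂),
      fderiv ℝ (fun y => MvPolynomial.eval (fun j => derT^[k j] f₂ y) P /
          MvPolynomial.eval (fun j => derT^[k j] f₂ y) Q) x (0, v₂) =
        ((p : ℝ) - (q : ℝ)) *
          (MvPolynomial.eval (fun j => derT^[k j] f₂ x) P /
            MvPolynomial.eval (fun j => derT^[k j] f₂ x) Q) * fderiv ℝ f₁ x (0, v₂) := by
  classical
  intro x v₂
  set v : ℝ × E₂ := ((0 : ℝ), v₂) with hv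
  set g : Fin s → ℝ × E₂ → ℝ := fun j => derT^[k j] f₂ with hgdef
  have hgsm : ∀ j, ContDiff ℝ ∞ (g j) := fun j => contDiff_derT_iter_aux hf₂ (k j)
  have hgd : ∀ j, Differentiable ℝ (g j) := fun j => (hgsm j).differentiable (by simp)
  set ψ : ℝ := fderiv ℝ f₁ x v with hψ
  -- the line through x in direction v
  set c : ℝ → ℝ × E₂ := fun t => x + t • v with hcdef
  have hc0 : c 0 = x := by simp [hcdef]
  have hcd : HasDerivAt c v 0 := by
    simpa [hcdef] using ((hasDerivAt_id (0 : ℝ)).smul_const v).const_add x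
  -- derivatives of each g j along the line
  have hφ : ∀ j, HasDerivAt (fun t => g j (c t)) (g j (c 0) * ψ) 0 := by
    intro j
    have h1 : HasDerivAt (g j ∘ c) (fderiv ℝ (g j) x v) 0 :=
      ((hgd j) x).hasFDerivAt.comp_hasDerivAt_of_eq 0 hcd hc0.symm
    have h2 : fderiv ℝ (g j) x v = g j x * ψ := hrel (k j) (hk j) x v₂
    rw [h2] at h1
    rw [hc0]
    exact h1
  -- numerator and denominator derivatives along the line
  have hA : HasDerivAt (fun r => MvPolynomial.eval (fun j => g j (c r)) P)
      ((p : ℝ) * MvPolynomial.eval (fun j => g j (c 0)) P * ψ) 0 :=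
    hasDerivAt_eval_rel_aux hφ hP
  have hB : HasDerivAt (fun r => MvPolynomial.eval (fun j => g j (c r)) Q)
      ((q : ℝ) * MvPolynomial.eval (fun j => g j (c 0)) Q * ψ) 0 :=
    hasDerivAt_eval_rel_aux hφ hQ
  rw [hc0] at hA hB
  set A := MvPolynomial.eval (fun j => g j x) P with hAdef
  set B := MvPolynomial.eval (fun j => g j x) Q with hBdef
  have hBne : B ≠ 0 := hQne x
  have hdiv : HasDerivAt
      (fun r => MvPolynomial.eval (fun j => g j (c r)) P /
          MvPolynomial.eval (fun j => g j (c r)) Q)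
      ((((p : ℝ) * A * ψ) * B - A * ((q : ℝ) * B * ψ)) / B ^ 2) 0 := by
    have := hA.fun_div hB (by rw [hc0]; exact hBne)
    refine this.congr_deriv ?_; rw [hc0]
  -- differentiability of the quotient on M
  have hprod : ∀ d : Fin s →₀ ℕ, DifferentiableAt ℝ (fun y => ∏ i, g i y ^ d i) x := fun d =>
    (HasFDerivAt.finset_prod (g := fun i y => g i y ^ d i)
      (fun i _ => (((hgd i) x).pow (d i)).hasFDerivAt)).differentiableAt
  have hA_diff : DifferentiableAt ℝ (fun y => MvPolynomial.eval (fun j => g j y) P) x := by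
    simp only [MvPolynomial.eval_eq']
    exact DifferentiableAt.fun_sum fun d _ => (hprod d).const_mul _
  have hB_diff : DifferentiableAt ℝ (fun y => MvPolynomial.eval (fun j => g j y) Q) x := by
    simp only [MvPolynomial.eval_eq']
    exact DifferentiableAt.fun_sum fun d _ => (hprod d).const_mul _
  have hinv_diff : DifferentiableAt ℝ
      (fun y => (MvPolynomial.eval (fun j => g j y) Q)⁻¹) x :=
    (differentiableAt_inv hBne).comp x hB_diff
  have hF_diff : DifferentiableAt ℝ
      (fun y => MvPolynomial.eval (fun j => g j y) P /
        MvPolynomial.eval (fun j => g j y) Q) x := by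
    simp only [div_eq_mul_inv]
    exact hA_diff.mul hinv_diff
  have hcomp : HasDerivAt
      ((fun y => MvPolynomial.eval (fun j => g j y) P /
          MvPolynomial.eval (fun j => g j y) Q) ∘ c)
      (fderiv ℝ (fun y => MvPolynomial.eval (fun j => g j y) P /
          MvPolynomial.eval (fun j => g j y) Q) x v) 0 :=
    hF_diff.hasFDerivAt.comp_hasDerivAt_of_eq 0 hcd hc0.symm
  have huniq := hcomp.unique hdiv
  rw [huniq]
  field_simp

end
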